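/- Let (Ω, 𝔉, μ) be a probability space, let T : Ω → Ω be a measurable map preserving μ (the pushforward of μ under T equals μ), let r : Ω → ℝ and H : Ω → ℝ be measurable with r ∘ T = −r and H ∘ T = H. Then the conditional expectation of the sign of r given the σ-algebra generated by H vanishes: μ[ sgn ∘ r | σ(H) ] = 0 almost everywhere, where sgn x = 1 for x > 0, −1 for x < 0, and 0 for x = 0. -/
import Mathlib


open MeasureTheory

lemma measurable_real_sign : Measurable Real.sign := by
  unfold Real.sign
  exact Measurable.ite (measurableSet_lt measurable_id measurable_const) measurable_const
    (Measurable.ite (measurableSet_lt measurable_const measurable_id) measurable_const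
      measurable_const)

/-- **Directional unpredictability.**
If `T` preserves the probability measure `μ`, negates the return `r`
(`r ∘ T = -r`) and fixes the entropy `H` (`H ∘ T = H`), then the conditional
expectation of `sgn ∘ r` given the σ-algebra generated by `H` vanishes almost
everywhere, where `sgn x = 1` for `x > 0`, `-1` for `x < 0`, and `0` for
`x = 0` (this is `Real.sign`). -/
theorem condexp_sign_return_eq_zero
    {Ω : Type*} [MeasurableSpace Ω] (μ : Measure Ω) [IsProbabilityMeasure μ]
    (T : Ω → Ω) (hT : Measurable T) (hTμ : Measure.map T μ = μ)
    (r H : Ω → ℝ) (hr : Measurable r) (hH : Measurable H)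
    (hrT : r ∘ T = -r) (hHT : H ∘ T = H) :
    μ[fun ω => Real.sign (r ω)|MeasurableSpace.comap H Real.measurableSpace]
      =ᵐ[μ] 0 := by
  have hm : MeasurableSpace.comap H Real.measurableSpace ≤ ‹MeasurableSpace Ω› :=
    hH.comap_le
  set f : Ω → ℝ := fun ω => Real.sign (r ω) with hf_def
  have hf_meas : Measurable f := measurable_real_sign.comp hr
  have hf_bdd : ∀ ω, ‖f ω‖ ≤ 1 := by
    intro ω
    rcases Real.sign_apply_eq (r ω) with h | h | h <;> simp [f, h]
  have hf_int : Integrable f μ := by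
    refine Integrable.mono' (integrable_const 1) hf_meas.aestronglyMeasurable ?_
    exact Filter.Eventually.of_forall hf_bdd
  have hkey : ∀ s : Set Ω,
      MeasurableSet[MeasurableSpace.comap H Real.measurableSpace] s →
      ∫ x in s, f x ∂μ = 0 := by
    intro s hs
    obtain ⟨B, hB, rfl⟩ := hs
    have hsmeas : MeasurableSet (H ⁻¹' B) := hH hB
    have hTs : T ⁻¹' (H ⁻¹' B) = H ⁻¹' B := by
      rw [← Set.preimage_comp, hHT]
    have h1 : ∫ x in H ⁻¹' B, f x ∂μ = ∫ x in H ⁻¹' B, f (T x) ∂μ := by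
      conv_lhs => rw [← hTμ]
      rw [setIntegral_map hsmeas hf_meas.aestronglyMeasurable hT.aemeasurable, hTs]
    have h2 : ∀ x, f (T x) = - f x := by
      intro x
      have : r (T x) = - r x := congrFun hrT x
      simp [f, this, Real.sign_neg]
    have h3 : ∫ x in H ⁻¹' B, f (T x) ∂μ = - ∫ x in H ⁻¹' B, f x ∂μ := by
      simp_rw [h2]
      exact integral_neg _
    have := h1.trans h3
    linarith
  have h0 : (0 : Ω → ℝ) =ᵐ[μ] μ[f|MeasurableSpace.comap H Real.measurableSpace] := by
    refine ae_eq_condExp_of_forall_setIntegral_eq hm hf_int ?_ ?_ ?_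
    · intro s _ _; exact integrableOn_zero
    · intro s hs _
      simp [hkey s hs]
    · exact StronglyMeasurable.aestronglyMeasurable
        (@stronglyMeasurable_const _ _ (MeasurableSpace.comap H Real.measurableSpace) _ 0)
  exact h0.symm
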